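/- Let P, P' be patches contained in tilings of Ω, t₁, t₂ ∈ P and t₁', t₂' ∈ P' with x(t₂) = 0 and x(t₁') = 0. Then: (i) the composition V(P, t₁, t₂) ∘ V(P', t₁', t₂') = {(T, T'') : there exists T' with (T, T') ∈ V(P, t₁, t₂) and (T', T'') ∈ V(P', t₁', t₂')} equals V(P ∪ P', t₁, t₂') if P ∪ P' is a partial tiling (i.e. P and P' agree on the overlap of their supports), and is empty otherwise; (ii) the transpose {(T', T) : (T, T') ∈ V(P, t₁, t₂)} equals V(P, t₂, t₁). -/

import Mathlib

open Metric Set Pointwise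

noncomputable section

/-- Points of `ℝ^d`. -/
abbrev Pt (d : ℕ) := EuclideanSpace ℝ (Fin d)

/-- A (possibly labelled) tile in `ℝ^d`: a subset of `ℝ^d` together with a label. -/
structure Tile (d : ℕ) where
  carrier : Set (Pt d)
  label : ℕ

instance {d : ℕ} : Inhabited (Tile d) := ⟨⟨∅, 0⟩⟩

/-- Translate of a tile by a vector. -/
def Tile.translate {d : ℕ} (t : Tile d) (x : Pt d) : Tile d :=
  ⟨(fun y => y + x) '' t.carrier, t.label⟩

/-- A tile proper: homeomorphic to the closed unit ball. -/
def Tile.IsTile {d : ℕ} (t : Tile d) : Prop :=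
  Nonempty (t.carrier ≃ₜ (Metric.closedBall (0 : Pt d) 1))

/-- Support of a partial tiling: the union of its tiles. -/
def psupp {d : ℕ} (P : Set (Tile d)) : Set (Pt d) := ⋃ t ∈ P, t.carrier

/-- `tilesAt P U` = the tiles of `P` meeting `U`, written `P(U)` in the paper. -/
def tilesAt {d : ℕ} (P : Set (Tile d)) (U : Set (Pt d)) : Set (Tile d) :=
  {t ∈ P | (t.carrier ∩ U).Nonempty}

/-- Translate of a collection of tiles. -/
def translateSet {d : ℕ} (P : Set (Tile d)) (x : Pt d) : Set (Tile d) :=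
  (fun t => t.translate x) '' P

/-- A partial tiling: tiles with pairwise disjoint interiors. -/
def IsPartialTiling {d : ℕ} (P : Set (Tile d)) : Prop :=
  (∀ t ∈ P, t.IsTile) ∧
  ∀ t ∈ P, ∀ t' ∈ P, t ≠ t' → interior t.carrier ∩ interior t'.carrier = ∅

/-- A patch: a finite partial tiling. -/
def IsPatch {d : ℕ} (P : Set (Tile d)) : Prop := IsPartialTiling P ∧ P.Finite

/-- A tiling of all of `ℝ^d`. -/
def IsTilingOfSpace {d : ℕ} (P : Set (Tile d)) : Prop :=
  IsPartialTiling P ∧ psupp P = univ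

/-- A substitution tiling system `(𝒫, ω)` with inflation constant `λ > 1`. -/
structure SubstSystem (d : ℕ) where
  proto : Set (Tile d)
  proto_finite : proto.Finite
  proto_nonempty : proto.Nonempty
  proto_isTile : ∀ p ∈ proto, p.IsTile
  proto_zero_mem : ∀ p ∈ proto, (0 : Pt d) ∈ interior p.carrier
  proto_no_translate : ∀ p ∈ proto, ∀ q ∈ proto, ∀ x : Pt d,
    q = p.translate x → p = q ∧ x = 0
  lam : ℝ
  one_lt_lam : 1 < lam
  sub : Tile d → Set (Tile d)
  sub_patch : ∀ p ∈ proto, IsPatch (sub p)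
  sub_proto : ∀ p ∈ proto, ∀ t ∈ sub p, ∃ q ∈ proto, ∃ x : Pt d, t = q.translate x
  sub_supp : ∀ p ∈ proto, psupp (sub p) = lam • p.carrier
  sub_translate : ∀ (t : Tile d) (x : Pt d),
    sub (t.translate x) = (fun s => s.translate (lam • x)) '' sub t

namespace SubstSystem

variable {d : ℕ} (S : SubstSystem d)

/-- Tile-wise application of the substitution to a collection of tiles. -/
def subSet (P : Set (Tile d)) : Set (Tile d) := ⋃ t ∈ P, S.sub t

/-- Iterated substitution `ω^n` on collections of tiles. -/
def subIter (n : ℕ) (P : Set (Tile d)) : Set (Tile d) := (S.subSet)^[n] P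

/-- `ω^n(t)` for a single tile `t`. -/
def omegan (n : ℕ) (t : Tile d) : Set (Tile d) := S.subIter n {t}

/-- The continuous hull `Ω`. -/
def Omega : Set (Set (Tile d)) :=
  {T | IsTilingOfSpace T ∧ ∀ P : Set (Tile d), P ⊆ T → IsPatch P →
    ∃ n : ℕ, ∃ p ∈ S.proto, ∃ x : Pt d, P ⊆ translateSet (S.omegan n p) x}

/-- `x` is the puncture of the tile `t`, i.e. `t = p + x` for a prototile `p`. -/
def IsPuncture (t : Tile d) (x : Pt d) : Prop :=
  ∃ p ∈ S.proto, t = p.translate x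

open Classical in
/-- The puncture `x(t)` of a tile `t` (chosen; unique for translates of prototiles). -/
def punc (t : Tile d) : Pt d :=
  if h : ∃ x : Pt d, S.IsPuncture t x then h.choose else 0

/-- The punctured hull (transversal) `Ω_punc`. -/
def OmegaPunc : Set (Set (Tile d)) :=
  {T ∈ S.Omega | ∃ t ∈ T, S.IsPuncture t 0}

end SubstSystem

/-- The tiling metric. -/
def tilingDist {d : ℕ} (T T' : Set (Tile d)) : ℝ :=
  sInf ({1} ∪ {ε : ℝ | 0 < ε ∧ ∃ x x' : Pt d, ‖x‖ < ε ∧ ‖x'‖ < ε ∧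
    tilesAt (translateSet T (-x)) (ball (0 : Pt d) (1 / ε)) =
      tilesAt (translateSet T' (-x')) (ball (0 : Pt d) (1 / ε))})

namespace SubstSystem

variable {d : ℕ} (S : SubstSystem d)

/-- Density of a family of tilings in `Ω_punc` w.r.t. the tiling metric. -/
def DenseInPunc (E : Set (Set (Tile d))) : Prop :=
  ∀ T ∈ S.OmegaPunc, ∀ ε : ℝ, 0 < ε → ∃ T' ∈ E, tilingDist T T' < ε

/-- Openness of a subset of `Ω_punc` w.r.t. the tiling metric (subspace topology). -/
def OpenInPunc (E : Set (Set (Tile d))) : Prop :=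
  E ⊆ S.OmegaPunc ∧ ∀ T ∈ E, ∃ ε : ℝ, 0 < ε ∧
    ∀ T' ∈ S.OmegaPunc, tilingDist T T' < ε → T' ∈ E

/-- The translational equivalence relation `R_punc` on `Ω_punc`. -/
def Rpunc : Set (Set (Tile d) × Set (Tile d)) :=
  {TT | TT.1 ∈ S.OmegaPunc ∧ TT.2 ∈ S.OmegaPunc ∧ ∃ x : Pt d, TT.2 = translateSet TT.1 x}

/-- `Punc(n, p)`: the punctures of the tiles of `ω^n(p)`. -/
def Punc (n : ℕ) (p : Tile d) : Set (Pt d) :=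
  {x | ∃ t ∈ S.omegan n p, S.IsPuncture t x}

/-- `E^n_p(x, y)`. -/
def Eset (n : ℕ) (p : Tile d) (x y : Pt d) : Set (Set (Tile d) × Set (Tile d)) :=
  {TT | ∃ T ∈ S.OmegaPunc, p ∈ T ∧
    TT.1 = translateSet (S.subIter n T) (-x) ∧ TT.2 = translateSet (S.subIter n T) (-y)}

/-- `R_n`. -/
def Rn (n : ℕ) : Set (Set (Tile d) × Set (Tile d)) :=
  ⋃ p ∈ S.proto, ⋃ x ∈ S.Punc n p, ⋃ y ∈ S.Punc n p, S.Eset n p x y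

/-- `R_AF = ∪ₙ R_n`. -/
def RAF : Set (Set (Tile d) × Set (Tile d)) := ⋃ n : ℕ, S.Rn n

/-- `U(P, t)`. -/
def Uset (P : Set (Tile d)) (t : Tile d) : Set (Set (Tile d)) :=
  {T ∈ S.OmegaPunc | translateSet P (-(S.punc t)) ⊆ T}

/-- `V(P, t₁, t₂)`. -/
def Vset (P : Set (Tile d)) (t₁ t₂ : Tile d) : Set (Set (Tile d) × Set (Tile d)) :=
  {TT | TT.1 ∈ S.Uset P t₁ ∧ TT.2 = translateSet TT.1 (S.punc t₁ - S.punc t₂)}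

/-- (A1) primitivity. -/
def Primitive : Prop :=
  ∃ N : ℕ, ∀ p ∈ S.proto, ∀ q ∈ S.proto, ∃ x : Pt d, Tile.translate q x ∈ S.omegan N p

/-- (A2) finite local complexity. -/
def FLC : Prop :=
  ∀ R : ℝ, 0 < R → ∃ Ps : Set (Set (Tile d)), Ps.Finite ∧
    ∀ P : Set (Tile d), IsPatch P → Metric.diam (psupp P) < R →
      (∃ T ∈ S.Omega, P ⊆ T) → ∃ P₀ ∈ Ps, ∃ x : Pt d, P = translateSet P₀ x

/-- (A3) `ω : Ω → Ω` is bijective. -/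
def SubBijective : Prop := Set.BijOn S.subSet S.Omega S.Omega

/-- (A4) `ω` forces its border. -/
def ForcesBorder : Prop :=
  ∃ n : ℕ, ∀ p ∈ S.proto, ∀ T ∈ S.Omega, ∀ T' ∈ S.Omega, ∀ x x' : Pt d,
    translateSet (S.omegan n p) x ⊆ T → translateSet (S.omegan n p) x' ⊆ T' →
    translateSet (tilesAt T ((fun y => y + x) '' psupp (S.omegan n p))) (-x) =
      translateSet (tilesAt T' ((fun y => y + x') '' psupp (S.omegan n p))) (-x')

/-- Prototile boundaries have box-counting dimension strictly less than `d`. -/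
def SmallBoundary : Prop :=
  ∃ c : ℝ, c < d ∧ ∃ K₀ : ℝ, ∀ p ∈ S.proto, ∀ ε : ℝ, 0 < ε →
    ∃ centers : Finset (Pt d), (centers.card : ℝ) ≤ K₀ * ε ^ (-c) ∧
      frontier p.carrier ⊆ ⋃ z ∈ centers, ball z ε

end SubstSystem

/-- A symmetry group action for `(𝒫, ω)`: `G ≤ O(d, ℝ)` acting on tiles, preserving
the prototile set and commuting with the substitution. -/
structure SymmAction {d : ℕ} (S : SubstSystem d) (G : Subgroup (Pt d ≃ₗᵢ[ℝ] Pt d)) where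
  act : G → Tile d → Tile d
  act_carrier : ∀ (g : G) (t : Tile d),
    (act g t).carrier = (g : Pt d ≃ₗᵢ[ℝ] Pt d) '' t.carrier
  act_one : ∀ t : Tile d, act 1 t = t
  act_mul : ∀ (g h : G) (t : Tile d), act (g * h) t = act g (act h t)
  act_proto : ∀ (g : G), ∀ p ∈ S.proto, act g p ∈ S.proto
  act_translate : ∀ (g : G) (t : Tile d) (x : Pt d),
    act g (t.translate x) = (act g t).translate ((g : Pt d ≃ₗᵢ[ℝ] Pt d) x)
  act_sub : ∀ (g : G), ∀ p ∈ S.proto, S.sub (act g p) = act g '' S.sub p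

/-- Action of a group element on a (partial) tiling: `gT = {gt : t ∈ T}`. -/
def SymmAction.actSet {d : ℕ} {S : SubstSystem d} {G : Subgroup (Pt d ≃ₗᵢ[ℝ] Pt d)}
    (σ : SymmAction S G) (g : G) (T : Set (Tile d)) : Set (Tile d) := σ.act g '' T

/-- `G` acts freely on the prototile set. -/
def SymmAction.FreeOnProto {d : ℕ} {S : SubstSystem d} {G : Subgroup (Pt d ≃ₗᵢ[ℝ] Pt d)}
    (σ : SymmAction S G) : Prop := ∀ g : G, ∀ p ∈ S.proto, σ.act g p = p → g = 1

/-- Composition of relations. -/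
def relComp {α : Type*} (R₁ R₂ : Set (α × α)) : Set (α × α) :=
  {q | ∃ z : α, (q.1, z) ∈ R₁ ∧ (z, q.2) ∈ R₂}

/-- Transpose (inverse) of a relation. -/
def relTrans {α : Type*} (R : Set (α × α)) : Set (α × α) := {q | (q.2, q.1) ∈ R}

end

section Helpers

variable {d : ℕ}

lemma tile_translate_translate (t : Tile d) (x y : Pt d) :
    (t.translate x).translate y = t.translate (x + y) := by
  cases t with
  | mk c l =>
    simp only [Tile.translate, Tile.mk.injEq, Set.image_image, and_true]
    apply Set.image_congr'
    intro z; rw [add_assoc]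

lemma tile_translate_zero (t : Tile d) : t.translate 0 = t := by
  cases t; simp [Tile.translate]

lemma translateSet_translateSet (P : Set (Tile d)) (x y : Pt d) :
    translateSet (translateSet P x) y = translateSet P (x + y) := by
  simp only [translateSet, Set.image_image]
  exact Set.image_congr' (fun t => tile_translate_translate t x y)

lemma translateSet_zero (P : Set (Tile d)) : translateSet P 0 = P := by
  simp [translateSet, tile_translate_zero]

lemma translateSet_neg_cancel (P : Set (Tile d)) (x : Pt d) :
    translateSet (translateSet P (-x)) x = P := by
  rw [translateSet_translateSet, neg_add_cancel, translateSet_zero]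

lemma translateSet_mono {P Q : Set (Tile d)} (h : P ⊆ Q) (x : Pt d) :
    translateSet P x ⊆ translateSet Q x := Set.image_mono h

lemma mem_translateSet {P : Set (Tile d)} {t : Tile d} (h : t ∈ P) (x : Pt d) :
    t.translate x ∈ translateSet P x := Set.mem_image_of_mem _ h

lemma tile_isTile_translate {t : Tile d} (h : t.IsTile) (x : Pt d) :
    (t.translate x).IsTile := by
  obtain ⟨e⟩ := h
  exact ⟨(((Homeomorph.addRight x).image t.carrier).symm.trans e)⟩

lemma interior_image_add (s : Set (Pt d)) (x : Pt d) :
    interior ((fun y => y + x) '' s) = (fun y => y + x) '' interior s :=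
  ((Homeomorph.addRight x).image_interior s).symm

lemma tile_translate_injective (x : Pt d) :
    Function.Injective (fun t : Tile d => t.translate x) := by
  intro s t h
  have := congrArg (fun u : Tile d => u.translate (-x)) h
  simpa [tile_translate_translate, tile_translate_zero] using this

lemma isPartialTiling_translate {P : Set (Tile d)} (h : IsPartialTiling P) (x : Pt d) :
    IsPartialTiling (translateSet P x) := by
  constructor
  · rintro t ⟨s, hs, rfl⟩
    exact tile_isTile_translate (h.1 s hs) x
  · rintro t ⟨s, hs, rfl⟩ t' ⟨s', hs', rfl⟩ hne
    have hne' : s ≠ s' := fun hss => hne (by rw [hss])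
    have hinj : Function.Injective (fun y : Pt d => y + x) := fun a b => by
      simpa using add_left_injective x
    show interior ((fun y => y + x) '' s.carrier) ∩
        interior ((fun y => y + x) '' s'.carrier) = ∅
    rw [interior_image_add, interior_image_add,
      ← Set.image_inter (add_left_injective x), h.2 s hs s' hs' hne', Set.image_empty]

lemma isPartialTiling_subset {P Q : Set (Tile d)} (h : IsPartialTiling Q) (hPQ : P ⊆ Q) :
    IsPartialTiling P :=
  ⟨fun t ht => h.1 t (hPQ ht), fun t ht t' ht' => h.2 t (hPQ ht) t' (hPQ ht')⟩

lemma isPatch_translate {P : Set (Tile d)} (h : IsPatch P) (x : Pt d) :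
    IsPatch (translateSet P x) :=
  ⟨isPartialTiling_translate h.1 x, h.2.image _⟩

lemma psupp_translate (P : Set (Tile d)) (x : Pt d) :
    psupp (translateSet P x) = (fun y => y + x) '' psupp P := by
  simp only [psupp, translateSet, Set.biUnion_image, Set.image_iUnion]
  rfl

lemma omega_translate {S : SubstSystem d} {T : Set (Tile d)} (hT : T ∈ S.Omega) (x : Pt d) :
    translateSet T x ∈ S.Omega := by
  obtain ⟨⟨hpt, hsupp⟩, hpatch⟩ := hT
  refine ⟨⟨isPartialTiling_translate hpt x, ?_⟩, ?_⟩
  · rw [psupp_translate, hsupp, Set.image_univ]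
    exact Set.range_eq_univ.2 fun y => ⟨y - x, by simp⟩
  · intro Q hQT hQ
    have hQ' : translateSet Q (-x) ⊆ T := by
      have := translateSet_mono hQT (-x)
      rwa [translateSet_translateSet, add_neg_cancel, translateSet_zero] at this
    obtain ⟨n, p, hp, y, hy⟩ := hpatch _ hQ' (isPatch_translate hQ (-x))
    refine ⟨n, p, hp, y + x, ?_⟩
    have := translateSet_mono hy x
    rwa [translateSet_neg_cancel, translateSet_translateSet] at this

lemma subSet_translate_proto {S : SubstSystem d} {A : Set (Tile d)}
    (h : ∀ t ∈ A, ∃ q ∈ S.proto, ∃ y : Pt d, t = q.translate y) :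
    ∀ t ∈ S.subSet A, ∃ q ∈ S.proto, ∃ y : Pt d, t = q.translate y := by
  intro t ht
  obtain ⟨s, hs, hts⟩ := Set.mem_iUnion₂.1 ht
  obtain ⟨q, hq, y, rfl⟩ := h s hs
  rw [S.sub_translate] at hts
  obtain ⟨s', hs', rfl⟩ := hts
  obtain ⟨r, hr, z, rfl⟩ := S.sub_proto q hq s' hs'
  exact ⟨r, hr, z + S.lam • y, tile_translate_translate r z (S.lam • y)⟩

lemma omegan_tiles_proto {S : SubstSystem d} {p : Tile d} (hp : p ∈ S.proto) (n : ℕ) :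
    ∀ t ∈ S.omegan n p, ∃ q ∈ S.proto, ∃ y : Pt d, t = q.translate y := by
  induction n with
  | zero =>
    intro t ht
    have : t = p := ht
    exact ⟨p, hp, 0, by rw [this, tile_translate_zero]⟩
  | succ n ih =>
    intro t ht
    have : t ∈ S.subSet (S.subIter n {p}) := by
      rwa [SubstSystem.omegan, SubstSystem.subIter, Function.iterate_succ_apply'] at ht
    exact subSet_translate_proto ih t this

lemma exists_isPuncture {S : SubstSystem d} {T : Set (Tile d)} (hT : T ∈ S.Omega)
    {t : Tile d} (ht : t ∈ T) : ∃ x : Pt d, S.IsPuncture t x := by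
  have htile : t.IsTile := hT.1.1.1 t ht
  have hpatch : IsPatch {t} := by
    refine ⟨⟨?_, ?_⟩, Set.finite_singleton t⟩
    · intro s hs; rw [Set.mem_singleton_iff] at hs; rw [hs]; exact htile
    · intro s hs s' hs' hne
      rw [Set.mem_singleton_iff] at hs hs'
      exact absurd (hs.trans hs'.symm) hne
  obtain ⟨n, p, hp, x, hx⟩ := hT.2 {t} (Set.singleton_subset_iff.2 ht) hpatch
  obtain ⟨s, hs, hts⟩ := hx rfl
  obtain ⟨q, hq, y, rfl⟩ := omegan_tiles_proto hp n s hs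
  exact ⟨y + x, q, hq, by rw [← hts]; exact tile_translate_translate q y x⟩

lemma isPuncture_punc {S : SubstSystem d} {t : Tile d} (h : ∃ x : Pt d, S.IsPuncture t x) :
    S.IsPuncture t (S.punc t) := by
  rw [SubstSystem.punc, dif_pos h]
  exact h.choose_spec

lemma isPuncture_zero_of_punc_zero {S : SubstSystem d} {t : Tile d}
    (h : ∃ x : Pt d, S.IsPuncture t x) (h0 : S.punc t = 0) : S.IsPuncture t 0 :=
  h0 ▸ isPuncture_punc h

end Helpers

/-- Composition and transpose of the basic graphs `V(P, t₁, t₂)`: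
`V(P, t₁, t₂) ∘ V(P', t₁', t₂') = V(P ∪ P', t₁, t₂')` when `P ∪ P'` is a partial
tiling (with `x(t₂) = 0 = x(t₁')`), and is empty otherwise; the transpose of
`V(P, t₁, t₂)` is `V(P, t₂, t₁)`. -/
theorem stmt8 {d : ℕ} (hd : 1 ≤ d) (S : SubstSystem d)
    (P P' : Set (Tile d)) (hP : IsPatch P) (hP' : IsPatch P')
    (hPT : ∃ T ∈ S.Omega, P ⊆ T) (hPT' : ∃ T ∈ S.Omega, P' ⊆ T)
    (t₁ : Tile d) (ht₁ : t₁ ∈ P) (t₂ : Tile d) (ht₂ : t₂ ∈ P)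
    (t₁' : Tile d) (ht₁' : t₁' ∈ P') (t₂' : Tile d) (ht₂' : t₂' ∈ P')
    (hx₂ : S.punc t₂ = 0) (hx₁' : S.punc t₁' = 0) :
    (IsPartialTiling (P ∪ P') →
      relComp (S.Vset P t₁ t₂) (S.Vset P' t₁' t₂') = S.Vset (P ∪ P') t₁ t₂') ∧
    (¬ IsPartialTiling (P ∪ P') →
      relComp (S.Vset P t₁ t₂) (S.Vset P' t₁' t₂') = ∅) ∧
    relTrans (S.Vset P t₁ t₂) = S.Vset P t₂ t₁ := by
  obtain ⟨T₀, hT₀, hPT₀⟩ := hPT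
  obtain ⟨T₀', hT₀', hPT₀'⟩ := hPT'
  have hpt₂ : S.IsPuncture t₂ 0 :=
    isPuncture_zero_of_punc_zero (exists_isPuncture hT₀ (hPT₀ ht₂)) hx₂
  have hpt₁' : S.IsPuncture t₁' 0 :=
    isPuncture_zero_of_punc_zero (exists_isPuncture hT₀' (hPT₀' ht₁')) hx₁'
  have hpt₁ : S.IsPuncture t₁ (S.punc t₁) :=
    isPuncture_punc (exists_isPuncture hT₀ (hPT₀ ht₁))
  have key : relComp (S.Vset P t₁ t₂) (S.Vset P' t₁' t₂') = S.Vset (P ∪ P') t₁ t₂' := by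
    ext ⟨T, T''⟩
    constructor
    · rintro ⟨T', ⟨⟨hTp, hTsub⟩, hT'eq⟩, ⟨⟨hT'p, hT'sub⟩, hT''eq⟩⟩
      dsimp only at hTp hTsub hT'eq hT'p hT'sub hT''eq ⊢
      rw [hx₂, sub_zero] at hT'eq
      rw [hx₁', neg_zero, translateSet_zero] at hT'sub
      rw [hx₁'] at hT''eq
      refine ⟨⟨hTp, ?_⟩, ?_⟩
      · rintro t ⟨s, hs, rfl⟩
        rcases hs with hs | hs
        · exact hTsub (mem_translateSet hs _)
        · have : (s : Tile d).translate (-S.punc t₁) ∈ translateSet T' (-S.punc t₁) :=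
            mem_translateSet (hT'sub hs) _
          rwa [hT'eq, translateSet_translateSet, add_neg_cancel, translateSet_zero] at this
      · rw [hT''eq, hT'eq, translateSet_translateSet]
        congr 1
        abel
    · rintro ⟨⟨hTp, hsub⟩, hT''⟩
      dsimp only at hTp hsub hT'' ⊢
      have hUnion : P ∪ P' ⊆ translateSet T (S.punc t₁) := by
        intro t ht
        have h1 : t.translate (-S.punc t₁) ∈ T := hsub (mem_translateSet ht _)
        have h2 := mem_translateSet h1 (S.punc t₁)
        rwa [tile_translate_translate, neg_add_cancel, tile_translate_zero] at h2
      refine ⟨translateSet T (S.punc t₁), ⟨⟨hTp, ?_⟩, ?_⟩, ⟨⟨?_, ?_⟩, ?_⟩⟩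
      · exact (translateSet_mono Set.subset_union_left (-S.punc t₁)).trans hsub
      · rw [hx₂, sub_zero]
      · exact ⟨omega_translate hTp.1 _, t₁', hUnion (Or.inr ht₁'), hpt₁'⟩
      · rw [hx₁', neg_zero, translateSet_zero]
        exact fun t ht => hUnion (Or.inr ht)
      · rw [hT'', hx₁', translateSet_translateSet]
        congr 1
        abel
  refine ⟨fun _ => key, ?_, ?_⟩
  · intro hnot
    rw [key]
    rw [Set.eq_empty_iff_forall_notMem]
    rintro ⟨T, T''⟩ ⟨⟨hTp, hsub⟩, -⟩
    dsimp only at hTp hsub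
    apply hnot
    have h1 : IsPartialTiling (translateSet (P ∪ P') (-S.punc t₁)) :=
      isPartialTiling_subset hTp.1.1.1 hsub
    have h2 := isPartialTiling_translate h1 (S.punc t₁)
    rwa [translateSet_neg_cancel] at h2
  · ext ⟨A, B⟩
    constructor
    · rintro ⟨⟨hBp, hBsub⟩, hA⟩
      dsimp only at hBp hBsub hA ⊢
      rw [hx₂, sub_zero] at hA
      have hPA : P ⊆ A := by
        intro t ht
        have h1 := mem_translateSet (hBsub (mem_translateSet ht (-S.punc t₁))) (S.punc t₁)
        rwa [tile_translate_translate, neg_add_cancel, tile_translate_zero, ← hA] at h1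
      refine ⟨⟨⟨?_, t₂, hPA ht₂, hpt₂⟩, ?_⟩, ?_⟩
      · rw [hA]; exact omega_translate hBp.1 _
      · rw [hx₂, neg_zero, translateSet_zero]; exact hPA
      · rw [hA, hx₂, translateSet_translateSet, zero_sub, add_neg_cancel, translateSet_zero]
    · rintro ⟨⟨hAp, hAsub⟩, hB⟩
      dsimp only at hAp hAsub hB ⊢
      rw [hx₂, neg_zero, translateSet_zero] at hAsub
      rw [hx₂, zero_sub] at hB
      obtain ⟨p, hp, hpeq⟩ := hpt₁
      have ht₁B : Tile.translate t₁ (-S.punc t₁) ∈ B := by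
        rw [hB]
        exact mem_translateSet (hAsub ht₁) _
      have hpunc : S.IsPuncture (Tile.translate t₁ (-S.punc t₁)) 0 := by
        refine ⟨p, hp, ?_⟩
        generalize S.punc t₁ = v at hpeq ⊢
        rw [hpeq, tile_translate_translate, add_neg_cancel]
      refine ⟨⟨⟨?_, Tile.translate t₁ (-S.punc t₁), ht₁B, hpunc⟩, ?_⟩, ?_⟩
      · rw [hB]; exact omega_translate hAp.1 _
      · rw [hB]; exact translateSet_mono hAsub _
      · rw [hB, hx₂, sub_zero, translateSet_translateSet, neg_add_cancel, translateSet_zero]
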